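/- In the Composite Mirror Prox setting with Lipschitz field (M = 0), the condition γ_τ ≤ 1/L guarantees δ_τ := γ_τ⟨F_u(u'_τ)−F_u(u_τ), u'_τ−u_{τ+1}⟩ − V_{u'_τ}(u_{τ+1}) − V_{u_τ}(u'_τ) ≤ 0. More generally, if 0 < γ_τ ≤ 1/(√2 L) then δ_τ ≤ γ_τ²M². -/
import Mathlib


local notation "⟪" x ", " y "⟫" => @inner ℝ _ _ x y

theorem stmt9 {Eu : Type*}
    [NormedAddCommGroup Eu] [InnerProductSpace ℝ Eu] [FiniteDimensional ℝ Eu]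
    (U : Set Eu) (nrm dnrm : Eu → ℝ)
    (hnrm : ∀ a, 0 ≤ nrm a) (hsymm : ∀ a, nrm (-a) = nrm a)
    (hpair : ∀ f a : Eu, ⟪f, a⟫ ≤ dnrm f * nrm a)
    (V : Eu → Eu → ℝ)
    (hVlb : ∀ u ∈ U, ∀ w ∈ U, (1/2) * (nrm (w - u))^2 ≤ V u w)
    (Fu : Eu → Eu) (L M : ℝ) (hL : 0 < L) (hM : 0 ≤ M)
    (hLip : ∀ u ∈ U, ∀ u' ∈ U, dnrm (Fu u - Fu u') ≤ L * nrm (u - u') + M)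
    (uτ u'τ uτ1 : Eu) (hu : uτ ∈ U) (hu' : u'τ ∈ U) (hu1 : uτ1 ∈ U)
    (γ : ℝ) (hγ : 0 < γ) :
    (M = 0 → γ ≤ 1/L →
      γ * ⟪Fu u'τ - Fu uτ, u'τ - uτ1⟫ - V u'τ uτ1 - V uτ u'τ ≤ 0) ∧
    (γ ≤ 1/(Real.sqrt 2 * L) →
      γ * ⟪Fu u'τ - Fu uτ, u'τ - uτ1⟫ - V u'τ uτ1 - V uτ u'τ ≤ γ^2 * M^2) := by
  set a := nrm (u'τ - uτ) with ha_def
  set b := nrm (u'τ - uτ1) with hb_def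
  have ha : 0 ≤ a := hnrm _
  have hb : 0 ≤ b := hnrm _
  have hdn : dnrm (Fu u'τ - Fu uτ) ≤ L * a + M := hLip u'τ hu' uτ hu
  have hI : ⟪Fu u'τ - Fu uτ, u'τ - uτ1⟫ ≤ (L * a + M) * b := by
    calc ⟪Fu u'τ - Fu uτ, u'τ - uτ1⟫ ≤ dnrm (Fu u'τ - Fu uτ) * b := hpair _ _
      _ ≤ (L * a + M) * b := by
        apply mul_le_mul_of_nonneg_right hdn hb
  have hV1 : (1/2) * b^2 ≤ V u'τ uτ1 := by
    have := hVlb u'τ hu' uτ1 hu1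
    have h2 : nrm (uτ1 - u'τ) = b := by
      rw [hb_def, ← hsymm (u'τ - uτ1), neg_sub]
    rwa [h2] at this
  have hV2 : (1/2) * a^2 ≤ V uτ u'τ := hVlb uτ hu u'τ hu'
  have hIg : γ * ⟪Fu u'τ - Fu uτ, u'τ - uτ1⟫ ≤ γ * ((L * a + M) * b) :=
    mul_le_mul_of_nonneg_left hI hγ.le
  constructor
  · intro hM0 hgL
    have hγL : γ * L ≤ 1 := by
      rw [le_div_iff₀ hL] at hgL; linarith
    subst hM0
    nlinarith [sq_nonneg (a - b), mul_nonneg ha hb, mul_nonneg (mul_nonneg ha hb) hγ.le,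
      mul_pos hγ hL, mul_le_mul_of_nonneg_right hγL (mul_nonneg ha hb)]
  · intro hgL
    have hs : Real.sqrt 2 > 0 := by positivity
    have hs2 : (Real.sqrt 2)^2 = 2 := Real.sq_sqrt (by norm_num)
    have hγL : Real.sqrt 2 * γ * L ≤ 1 := by
      rw [le_div_iff₀ (by positivity)] at hgL; linarith
    nlinarith [sq_nonneg (Real.sqrt 2 * a - b), sq_nonneg (b - 2 * γ * M),
      mul_nonneg ha hb, mul_nonneg (mul_nonneg ha hb) hγ.le,
      mul_le_mul_of_nonneg_right hγL (mul_nonneg (mul_nonneg ha hb) hs.le),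
      mul_nonneg hγ.le hM, mul_nonneg (mul_nonneg hγ.le hM) hb, sq_nonneg (γ*M)]
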